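/- arXiv:2003.12964 — 6 statements merged into one kernel-verified Lean document; each statement's English description precedes it below -/
import Mathlib

section
/- Let X be a T_4 space (normal and Hausdorff). Then the structure space M(B_1(X)) of B_1(X) is homeomorphic to the structure space M(B_1*(X)) of B_1*(X). -/
open Filter Topology

/-- The ring of Baire one (pointwise limits of sequences of continuous) real-valued
functions on a topological space, as a subring of `X → ℝ`. -/
def baireOne (X : Type*) [TopologicalSpace X] : Subring (X → ℝ) where
  carrier := {f | ∃ F : ℕ → C(X, ℝ), ∀ x, Tendsto (fun n => F n x) atTop (𝓝 (f x))}
  zero_mem' := ⟨fun _ => 0, fun x => by simpa using tendsto_const_nhds⟩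
  one_mem' := ⟨fun _ => 1, fun x => by simpa using tendsto_const_nhds⟩
  add_mem' := by
    rintro f g ⟨F, hF⟩ ⟨G, hG⟩
    exact ⟨fun n => F n + G n, fun x => by simpa using (hF x).add (hG x)⟩
  mul_mem' := by
    rintro f g ⟨F, hF⟩ ⟨G, hG⟩
    exact ⟨fun n => F n * G n, fun x => by simpa using (hF x).mul (hG x)⟩
  neg_mem' := by
    rintro f ⟨F, hF⟩
    exact ⟨fun n => -F n, fun x => by simpa using (hF x).neg⟩
/-- The subring of bounded Baire one real-valued functions. -/
def baireOneStar (X : Type*) [TopologicalSpace X] : Subring (X → ℝ) where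
  carrier := {f | f ∈ baireOne X ∧ ∃ C : ℝ, ∀ x, |f x| ≤ C}
  zero_mem' := ⟨(baireOne X).zero_mem, 0, by simp⟩
  one_mem' := ⟨(baireOne X).one_mem, 1, by simp⟩
  add_mem' := by
    rintro f g ⟨hf, C, hC⟩ ⟨hg, D, hD⟩
    exact ⟨(baireOne X).add_mem hf hg, C + D, fun x =>
      (abs_add_le _ _).trans (add_le_add (hC x) (hD x))⟩
  mul_mem' := by
    rintro f g ⟨hf, C, hC⟩ ⟨hg, D, hD⟩
    refine ⟨(baireOne X).mul_mem hf hg, C * D, fun x => ?_⟩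
    rw [Pi.mul_apply, abs_mul]
    exact mul_le_mul (hC x) (hD x) (abs_nonneg _) ((abs_nonneg _).trans (hC x))
  neg_mem' := by
    rintro f ⟨hf, C, hC⟩
    exact ⟨(baireOne X).neg_mem hf, C, fun x => by simpa using hC x⟩
/-- The structure space of a commutative ring: the set of its maximal ideals. -/
def StructSpace (R : Type*) [CommRing R] : Type _ := {I : Ideal R // I.IsMaximal}

/-- The hull-kernel topology on the structure space, whose closed sets are generated by
the base `{M | f ∈ M}`, `f ∈ R`. -/
instance (R : Type*) [CommRing R] : TopologicalSpace (StructSpace R) :=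
  TopologicalSpace.generateFrom {U : Set (StructSpace R) | ∃ f : R, U = {M | f ∉ M.1}}

section B1
variable {X : Type*} [TopologicalSpace X]

lemma baireOne.comp {f : X → ℝ} (hf : f ∈ baireOne X) {g : ℝ → ℝ} (hg : Continuous g) :
    (fun x => g (f x)) ∈ baireOne X := by
  obtain ⟨F, hF⟩ := hf
  exact ⟨fun n => ⟨fun x => g (F n x), hg.comp (F n).continuous⟩,
    fun x => (hg.tendsto _).comp (hF x)⟩

lemma baireOne.comp₂ {f g : X → ℝ} (hf : f ∈ baireOne X) (hg : g ∈ baireOne X)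
    {G : ℝ → ℝ → ℝ} (hG : Continuous fun p : ℝ × ℝ => G p.1 p.2) :
    (fun x => G (f x) (g x)) ∈ baireOne X := by
  obtain ⟨F, hF⟩ := hf
  obtain ⟨F', hF'⟩ := hg
  refine ⟨fun n => ⟨fun x => G (F n x) (F' n x),
    hG.comp ((F n).continuous.prodMk (F' n).continuous)⟩, fun x => ?_⟩
  exact (hG.tendsto (f x, g x)).comp ((hF x).prodMk_nhds (hF' x))

lemma baireOne.const_mem (c : ℝ) : (fun _ : X => c) ∈ baireOne X :=
  ⟨fun _ => ⟨fun _ => c, continuous_const⟩, fun _ => tendsto_const_nhds⟩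

/-- The key continuity fact for convexity of prime ideals. -/
lemma contH : Continuous fun p : ℝ × ℝ => p.1 ^ 4 / (p.1 ^ 2 + p.2 ^ 2) := by
  rw [continuous_iff_continuousAt]
  intro p
  rcases eq_or_ne p (0, 0) with rfl | hp
  · have key : Tendsto (fun p : ℝ × ℝ => p.1 ^ 4 / (p.1 ^ 2 + p.2 ^ 2)) (nhds (0,0)) (nhds 0) := by
      apply squeeze_zero (g := fun p : ℝ × ℝ => p.1 ^ 2)
      · intro t; positivity
      · intro t
        rcases eq_or_lt_of_le (by positivity : (0:ℝ) ≤ t.1 ^ 2 + t.2 ^ 2) with h | h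
        · rw [← h, div_zero]; positivity
        · rw [div_le_iff₀ h]; nlinarith [sq_nonneg t.1, sq_nonneg t.2, sq_nonneg (t.1^2)]
      · have h2 : Tendsto (fun p : ℝ × ℝ => p.1 ^ 2) (nhds (0, 0)) (nhds ((0:ℝ) ^ 2)) :=
          (continuous_fst.pow 2).tendsto _
        simpa using h2
    simpa [ContinuousAt] using key
  · have hne : p.1 ^ 2 + p.2 ^ 2 ≠ 0 := by
      intro h
      have h1 : p.1 = 0 := by nlinarith [sq_nonneg p.1, sq_nonneg p.2]
      have h2 : p.2 = 0 := by nlinarith [sq_nonneg p.1, sq_nonneg p.2]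
      exact hp (Prod.ext h1 h2)
    exact ((continuous_fst.pow 4).continuousAt).div
      (((continuous_fst.pow 2).add (continuous_snd.pow 2)).continuousAt) hne

abbrev A1 (X : Type*) [TopologicalSpace X] : Type _ := ↥(baireOne X)
abbrev B1s (X : Type*) [TopologicalSpace X] : Type _ := ↥(baireOneStar X)

end B1
section Cone
variable {X : Type*} [TopologicalSpace X]



@[simp] lemma vadd (a b : A1 X) (x : X) : (a + b).1 x = a.1 x + b.1 x := rfl
@[simp] lemma vmul (a b : A1 X) (x : X) : (a * b).1 x = a.1 x * b.1 x := rfl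
@[simp] lemma vneg (a : A1 X) (x : X) : (-a).1 x = -(a.1 x) := rfl
@[simp] lemma vsub (a b : A1 X) (x : X) : (a - b).1 x = a.1 x - b.1 x := rfl
@[simp] lemma vone (x : X) : (1 : A1 X).1 x = 1 := rfl
@[simp] lemma vzero (x : X) : (0 : A1 X).1 x = 0 := rfl

/-- constants in `baireOne X` -/
def cst (c : ℝ) : A1 X := ⟨fun _ => c, baireOne.const_mem c⟩

@[simp] lemma vcst (c : ℝ) (x : X) : (cst c).1 x = c := rfl

lemma cst_add (c d : ℝ) : (cst c + cst d : A1 X) = cst (c + d) := rfl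
lemma cst_mul (c d : ℝ) : (cst c * cst d : A1 X) = cst (c * d) := rfl
lemma cst_one : (cst 1 : A1 X) = 1 := rfl
lemma cst_zero : (cst 0 : A1 X) = 0 := rfl

/-- pointwise nonnegative -/
def Nn (r : A1 X) : Prop := ∀ x, 0 ≤ r.1 x

/-- the positive cone mod M -/
def Pos (M : Ideal (A1 X)) : Set (A1 X) := {r | ∃ g, Nn g ∧ r - g ∈ M}

variable {M : Ideal (A1 X)}

lemma nn_mem_pos {r : A1 X} (h : Nn r) : r ∈ Pos M := ⟨r, h, by simp⟩

lemma mem_pos_of_mem {r : A1 X} (h : r ∈ M) : r ∈ Pos M :=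
  ⟨0, fun x => le_refl 0, by simpa using h⟩

lemma pos_add {r r' : A1 X} (h : r ∈ Pos M) (h' : r' ∈ Pos M) : r + r' ∈ Pos M := by
  obtain ⟨g, hg, hm⟩ := h
  obtain ⟨g', hg', hm'⟩ := h'
  exact ⟨g + g', fun x => add_nonneg (hg x) (hg' x),
    by have : r + r' - (g + g') = (r - g) + (r' - g') := by noncomm_ring
       rw [this]; exact Ideal.add_mem _ hm hm'⟩

lemma pos_mul {r r' : A1 X} (h : r ∈ Pos M) (h' : r' ∈ Pos M) : r * r' ∈ Pos M := by
  obtain ⟨g, hg, hm⟩ := h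
  obtain ⟨g', hg', hm'⟩ := h'
  refine ⟨g * g', fun x => mul_nonneg (hg x) (hg' x), ?_⟩
  have : r * r' - g * g' = r * (r' - g') + (r - g) * g' := by noncomm_ring
  rw [this]
  exact Ideal.add_mem _ (Ideal.mul_mem_left _ _ hm') (Ideal.mul_mem_right _ _ hm)

variable (hM : M.IsMaximal)
include hM

lemma sq_mem {a : A1 X} (h : a * a ∈ M) : a ∈ M := by
  rcases hM.isPrime.mem_or_mem h with h | h <;> exact h

lemma sum_sq_mem {a b : A1 X} (h : a * a + b * b ∈ M) : a ∈ M := by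
  have hH : (fun x => (a.1 x) ^ 4 / ((a.1 x) ^ 2 + (b.1 x) ^ 2)) ∈ baireOne X :=
    baireOne.comp₂ (G := fun u v => u ^ 4 / (u ^ 2 + v ^ 2)) a.2 b.2 contH
  set H : A1 X := ⟨_, hH⟩ with hHdef
  have key : a * a * (a * a) = (a * a + b * b) * H := by
    apply Subtype.ext; funext x
    show a.1 x * a.1 x * (a.1 x * a.1 x)
      = (a.1 x * a.1 x + b.1 x * b.1 x) * ((a.1 x) ^ 4 / ((a.1 x) ^ 2 + (b.1 x) ^ 2))
    rcases eq_or_lt_of_le (by positivity : (0:ℝ) ≤ (a.1 x) ^ 2 + (b.1 x) ^ 2) with hz | hz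
    · have ha : a.1 x = 0 := by nlinarith [sq_nonneg (a.1 x), sq_nonneg (b.1 x)]
      simp [ha]
    · field_simp
  have h4 : a * a * (a * a) ∈ M := by rw [key]; exact Ideal.mul_mem_right _ _ h
  exact sq_mem hM (sq_mem hM h4)

lemma convex {a b : A1 X} (ha : Nn a) (hab : ∀ x, a.1 x ≤ b.1 x) (hb : b ∈ M) : a ∈ M := by
  have hc : (fun x => Real.sqrt (a.1 x * (b.1 x - a.1 x))) ∈ baireOne X :=
    baireOne.comp₂ (G := fun u v => Real.sqrt (u * (v - u))) a.2 b.2 (by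
      have : Continuous fun p : ℝ × ℝ => Real.sqrt (p.1 * (p.2 - p.1)) :=
        Real.continuous_sqrt.comp (continuous_fst.mul (continuous_snd.sub continuous_fst))
      exact this)
  set c : A1 X := ⟨_, hc⟩
  have key : a * a + c * c = a * b := by
    apply Subtype.ext; funext x
    show a.1 x * a.1 x + Real.sqrt (a.1 x * (b.1 x - a.1 x)) * Real.sqrt (a.1 x * (b.1 x - a.1 x))
      = a.1 x * b.1 x
    have hnn : (0:ℝ) ≤ a.1 x * (b.1 x - a.1 x) := by nlinarith [ha x, hab x]
    rw [Real.mul_self_sqrt hnn]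
    ring
  exact sum_sq_mem hM (by rw [key]; exact Ideal.mul_mem_left _ _ hb)

lemma abs_mem {b : A1 X} (hb : b ∈ M) : (⟨fun x => |b.1 x|, baireOne.comp b.2 continuous_abs⟩ : A1 X) ∈ M := by
  apply sq_mem hM
  have : (⟨fun x => |b.1 x|, baireOne.comp b.2 continuous_abs⟩ : A1 X)
      * ⟨fun x => |b.1 x|, baireOne.comp b.2 continuous_abs⟩ = b * b := by
    apply Subtype.ext; funext x
    show |b.1 x| * |b.1 x| = b.1 x * b.1 x
    rw [← abs_mul, abs_mul_self]
  rw [this]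
  exact Ideal.mul_mem_left _ _ hb

lemma abs_convex {a b : A1 X} (h : ∀ x, |a.1 x| ≤ |b.1 x|) (hb : b ∈ M) : a ∈ M := by
  have habs : (⟨fun x => |a.1 x|, baireOne.comp a.2 continuous_abs⟩ : A1 X) ∈ M :=
    convex hM (fun x => abs_nonneg _) h (abs_mem hM hb)
  apply sq_mem hM
  have : a * a = (⟨fun x => |a.1 x|, baireOne.comp a.2 continuous_abs⟩ : A1 X)
      * ⟨fun x => |a.1 x|, baireOne.comp a.2 continuous_abs⟩ := by
    apply Subtype.ext; funext x
    show a.1 x * a.1 x = |a.1 x| * |a.1 x|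
    rw [← abs_mul, abs_mul_self]
  rw [this]
  exact Ideal.mul_mem_left _ _ habs

lemma pos_antisymm {r : A1 X} (h1 : r ∈ Pos M) (h2 : -r ∈ Pos M) : r ∈ M := by
  obtain ⟨g, hg, hm⟩ := h1
  obtain ⟨g', hg', hm'⟩ := h2
  have hsum : g + g' ∈ M := by
    have : g + g' = -((r - g) + (-r - g')) := by noncomm_ring
    rw [this]
    exact neg_mem (Ideal.add_mem _ hm hm')
  have hgM : g ∈ M := convex hM hg (fun x => by have := hg' x; simp; linarith) hsum
  have : r = (r - g) + g := by ring
  rw [this]; exact Ideal.add_mem _ hm hgM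

lemma pos_total (r : A1 X) : r ∈ Pos M ∨ -r ∈ Pos M := by
  have hp : (fun x => max (r.1 x) 0) ∈ baireOne X :=
    baireOne.comp r.2 (continuous_id.max continuous_const)
  have hq : (fun x => max (-(r.1 x)) 0) ∈ baireOne X :=
    baireOne.comp r.2 ((continuous_neg).max continuous_const)
  set p : A1 X := ⟨_, hp⟩
  set q : A1 X := ⟨_, hq⟩
  have hpq : p * q ∈ M := by
    have : p * q = 0 := by
      apply Subtype.ext; funext x
      show max (r.1 x) 0 * max (-(r.1 x)) 0 = 0
      rcases le_total (r.1 x) 0 with h | h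
      · rw [max_eq_right h, zero_mul]
      · rw [max_eq_right (by linarith : -(r.1 x) ≤ 0), mul_zero]
    rw [this]; exact Ideal.zero_mem _
  rcases hM.isPrime.mem_or_mem hpq with h | h
  · right
    refine ⟨q, fun x => le_max_right _ _, ?_⟩
    have : -r - q = -p := by
      apply Subtype.ext; funext x
      show -(r.1 x) - max (-(r.1 x)) 0 = -(max (r.1 x) 0)
      rcases le_total (r.1 x) 0 with hx | hx
      · rw [max_eq_left (by linarith), max_eq_right hx]; ring
      · rw [max_eq_right (by linarith : -(r.1 x) ≤ 0), max_eq_left hx]; ring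
    rw [this]; exact neg_mem h
  · left
    refine ⟨p, fun x => le_max_right _ _, ?_⟩
    have : r - p = -q := by
      apply Subtype.ext; funext x
      show r.1 x - max (r.1 x) 0 = -(max (-(r.1 x)) 0)
      rcases le_total (r.1 x) 0 with hx | hx
      · rw [max_eq_right hx, max_eq_left (by linarith)]; ring
      · rw [max_eq_left hx, max_eq_right (by linarith : -(r.1 x) ≤ 0)]; ring
    rw [this]; exact neg_mem h

lemma unit_not_mem {r : A1 X} {δ : ℝ} (hδ : 0 < δ) (h : ∀ x, δ ≤ r.1 x) : r ∉ M := by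
  intro hmem
  have hinv : (fun x => (max (r.1 x) δ)⁻¹) ∈ baireOne X :=
    baireOne.comp r.2 ((continuous_id.max continuous_const).inv₀
      (fun t => by have : 0 < max t δ := lt_of_lt_of_le hδ (le_max_right _ _); positivity))
  have hone : r * (⟨_, hinv⟩ : A1 X) = 1 := by
    apply Subtype.ext; funext x
    show r.1 x * (max (r.1 x) δ)⁻¹ = 1
    rw [max_eq_left (h x)]
    exact mul_inv_cancel₀ (by have := h x; linarith)
  have : (1 : A1 X) ∈ M := by rw [← hone]; exact Ideal.mul_mem_right _ _ hmem
  exact hM.ne_top ((Ideal.eq_top_iff_one _).2 this)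

lemma cst_not_mem {c : ℝ} (hc : c ≠ 0) : cst c ∉ M := by
  intro hmem
  have : (cst c * cst c⁻¹ : A1 X) = 1 := by
    rw [cst_mul, mul_inv_cancel₀ hc, cst_one]
  have h1 : (1 : A1 X) ∈ M := by rw [← this]; exact Ideal.mul_mem_right _ _ hmem
  exact hM.ne_top ((Ideal.eq_top_iff_one _).2 h1)

end Cone
section Cut
variable {X : Type*} [TopologicalSpace X]

/-- bounded elements -/
def Bddf (r : A1 X) : Prop := ∃ C : ℝ, ∀ x, |r.1 x| ≤ C

lemma Bddf.add {r r' : A1 X} : Bddf r → Bddf r' → Bddf (r + r') := by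
  rintro ⟨C, hC⟩ ⟨D, hD⟩
  exact ⟨C + D, fun x => (abs_add_le _ _).trans (add_le_add (hC x) (hD x))⟩

lemma Bddf.neg {r : A1 X} : Bddf r → Bddf (-r) := by
  rintro ⟨C, hC⟩; exact ⟨C, fun x => by simpa using hC x⟩

lemma Bddf.mul {r r' : A1 X} : Bddf r → Bddf r' → Bddf (r * r') := by
  rintro ⟨C, hC⟩ ⟨D, hD⟩
  refine ⟨C * D, fun x => ?_⟩
  rw [vmul, abs_mul]
  exact mul_le_mul (hC x) (hD x) (abs_nonneg _) ((abs_nonneg _).trans (hC x))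

lemma Bddf.cst (c : ℝ) : Bddf (cst c : A1 X) := ⟨|c|, fun _ => le_refl _⟩

lemma Bddf.sub {r r' : A1 X} (h : Bddf r) (h' : Bddf r') : Bddf (r - r') := by
  rw [sub_eq_add_neg]; exact h.add h'.neg

variable {M : Ideal (A1 X)}

/-- lower cut set -/
def Lset (M : Ideal (A1 X)) (r : A1 X) : Set ℝ := {q | r - cst q ∈ Pos M}

/-- upper cut set -/
def Uset (M : Ideal (A1 X)) (r : A1 X) : Set ℝ := {q | cst q - r ∈ Pos M}

/-- the generalized standard-part / cut of an element -/
noncomputable def cut (M : Ideal (A1 X)) (r : A1 X) : ℝ := sSup (Lset M r)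

lemma L_of_nn {r : A1 X} {q : ℝ} (h : ∀ x, q ≤ r.1 x) : q ∈ Lset M r :=
  nn_mem_pos (fun x => by simpa using h x)

lemma L_down {r : A1 X} {q q' : ℝ} (h : q ∈ Lset M r) (hq : q' ≤ q) : q' ∈ Lset M r := by
  have : r - cst q' = (r - cst q) + cst (q - q') := by
    rw [show cst (q - q') = cst q - cst q' from rfl]; noncomm_ring
  unfold Lset
  rw [Set.mem_setOf_eq, this]
  exact pos_add h (nn_mem_pos (fun x => by simp; linarith))

lemma L_nonempty {r : A1 X} (hr : Bddf r) : (Lset M r).Nonempty := by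
  obtain ⟨C, hC⟩ := hr
  exact ⟨-C, L_of_nn (fun x => neg_le_of_abs_le (hC x))⟩

variable (hM : M.IsMaximal)
include hM

lemma L_le_U {r : A1 X} {q p : ℝ} (hq : q ∈ Lset M r) (hp : p ∈ Uset M r) : q ≤ p := by
  by_contra hlt
  push_neg at hlt
  have h1 : cst (p - q) ∈ Pos M := by
    have : (cst (p - q) : A1 X) = (r - cst q) + (cst p - r) := by
      rw [show (cst (p - q) : A1 X) = cst p - cst q from rfl]; noncomm_ring
    rw [this]; exact pos_add hq hp
  have h2 : (-(cst (p - q)) : A1 X) ∈ Pos M :=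
    nn_mem_pos (fun x => by simp; linarith)
  exact cst_not_mem hM (by linarith : p - q ≠ 0) (pos_antisymm hM h1 h2)

lemma L_bddAbove {r : A1 X} (hr : Bddf r) : BddAbove (Lset M r) := by
  obtain ⟨C, hC⟩ := hr
  refine ⟨C, fun q hq => ?_⟩
  exact L_le_U hM hq (nn_mem_pos (fun x => by simp; exact (abs_le.1 (hC x)).2) :
    (cst C - r : A1 X) ∈ Pos M)

lemma le_cut {r : A1 X} (hr : Bddf r) {q : ℝ} (hq : q ∈ Lset M r) : q ≤ cut M r :=
  le_csSup (L_bddAbove hM hr) hq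

lemma cut_le {r : A1 X} (hr : Bddf r) {p : ℝ} (hp : p ∈ Uset M r) : cut M r ≤ p :=
  csSup_le (L_nonempty hr) (fun _ hq => L_le_U hM hq hp)

lemma cut_sub_mem {r : A1 X} (hr : Bddf r) {ε : ℝ} (hε : 0 < ε) : cut M r - ε ∈ Lset M r := by
  obtain ⟨q, hq, hlt⟩ := exists_lt_of_lt_csSup (L_nonempty hr)
    (show cut M r - ε < cut M r by linarith)
  exact L_down hq hlt.le

lemma cut_add_mem_U {r : A1 X} (hr : Bddf r) {ε : ℝ} (hε : 0 < ε) :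
    cut M r + ε ∈ Uset M r := by
  have hnotL : cut M r + ε ∉ Lset M r := fun h => by
    have := le_cut hM hr h; linarith
  rcases pos_total hM (r - cst (cut M r + ε)) with h | h
  · exact absurd h hnotL
  · have : (cst (cut M r + ε) - r : A1 X) = -(r - cst (cut M r + ε)) := by noncomm_ring
    unfold Uset; rw [Set.mem_setOf_eq, this]; exact h

lemma cut_mono {r r' : A1 X} (hr : Bddf r) (hr' : Bddf r') (h : r' - r ∈ Pos M) :
    cut M r ≤ cut M r' := by
  apply csSup_le (L_nonempty hr)
  intro q hq
  apply le_cut hM hr'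
  have : r' - cst q = (r' - r) + (r - cst q) := by noncomm_ring
  unfold Lset; rw [Set.mem_setOf_eq, this]
  exact pos_add h hq

lemma cut_cst (c : ℝ) : cut M (cst c : A1 X) = c := by
  apply le_antisymm
  · exact cut_le hM (Bddf.cst c) (nn_mem_pos (fun x => by simp))
  · exact le_cut hM (Bddf.cst c) (L_of_nn (fun x => le_refl _))

lemma cut_mem_zero {r : A1 X} (h : r ∈ M) (hr : Bddf r) : cut M r = 0 := by
  apply le_antisymm
  · refine cut_le hM hr (mem_pos_of_mem ?_)
    rw [show (cst (0:ℝ) : A1 X) = 0 from rfl, zero_sub]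
    exact neg_mem h
  · refine le_cut hM hr (mem_pos_of_mem ?_)
    rw [show (cst (0:ℝ) : A1 X) = 0 from rfl, sub_zero]
    exact h

lemma cut_add {r r' : A1 X} (hr : Bddf r) (hr' : Bddf r') :
    cut M (r + r') = cut M r + cut M r' := by
  have hsum := hr.add hr'
  apply le_antisymm
  · apply le_of_forall_pos_le_add
    intro ε hε
    have h1 := cut_add_mem_U hM hr (half_pos hε)
    have h2 := cut_add_mem_U hM hr' (half_pos hε)
    have : (cst (cut M r + ε/2 + (cut M r' + ε/2)) - (r + r') : A1 X)
        = (cst (cut M r + ε/2) - r) + (cst (cut M r' + ε/2) - r') := by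
      rw [show (cst (cut M r + ε/2 + (cut M r' + ε/2)) : A1 X)
        = cst (cut M r + ε/2) + cst (cut M r' + ε/2) from rfl]; noncomm_ring
    have hU : cut M r + ε/2 + (cut M r' + ε/2) ∈ Uset M (r + r') := by
      unfold Uset; rw [Set.mem_setOf_eq, this]; exact pos_add h1 h2
    have := cut_le hM hsum hU
    linarith
  · apply le_of_forall_pos_le_add
    intro ε hε
    have h1 := cut_sub_mem hM hr (half_pos hε)
    have h2 := cut_sub_mem hM hr' (half_pos hε)
    have heq : ((r + r') - cst (cut M r - ε/2 + (cut M r' - ε/2)) : A1 X)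
        = (r - cst (cut M r - ε/2)) + (r' - cst (cut M r' - ε/2)) := by
      rw [show (cst (cut M r - ε/2 + (cut M r' - ε/2)) : A1 X)
        = cst (cut M r - ε/2) + cst (cut M r' - ε/2) from rfl]; noncomm_ring
    have hL : cut M r - ε/2 + (cut M r' - ε/2) ∈ Lset M (r + r') := by
      unfold Lset; rw [Set.mem_setOf_eq, heq]; exact pos_add h1 h2
    have := le_cut hM hsum hL
    linarith

lemma cut_neg {r : A1 X} (hr : Bddf r) : cut M (-r) = -cut M r := by
  have h := cut_add hM hr hr.neg
  rw [show r + -r = (0 : A1 X) by ring, show (0 : A1 X) = cst 0 from rfl, cut_cst hM] at h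
  linarith

lemma cut_smul_pos {c : ℝ} (hc : 0 < c) {r : A1 X} (hr : Bddf r) :
    cut M (cst c * r) = c * cut M r := by
  have hbdd : Bddf (cst c * r : A1 X) := (Bddf.cst c).mul hr
  apply le_antisymm
  · apply csSup_le (L_nonempty hbdd)
    intro q hq
    have key : (r - cst (q / c) : A1 X) = cst c⁻¹ * (cst c * r - cst q) := by
      apply Subtype.ext; funext x
      show r.1 x - q / c = c⁻¹ * (c * r.1 x - q)
      field_simp
    have hL : q / c ∈ Lset M r := by
      unfold Lset; rw [Set.mem_setOf_eq, key]
      exact pos_mul (nn_mem_pos (fun x => by simp; positivity)) hq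
    have := le_cut hM hr hL
    calc q = c * (q / c) := by field_simp
    _ ≤ c * cut M r := by nlinarith
  · apply le_of_forall_pos_le_add
    intro ε hε
    have hL := cut_sub_mem hM hr (show (0:ℝ) < ε / c by positivity)
    have key : (cst c * r - cst (c * (cut M r - ε / c)) : A1 X)
        = cst c * (r - cst (cut M r - ε / c)) := by
      apply Subtype.ext; funext x
      show c * r.1 x - c * (cut M r - ε / c) = c * (r.1 x - (cut M r - ε / c))
      ring
    have hL2 : c * (cut M r - ε / c) ∈ Lset M (cst c * r) := by
      unfold Lset; rw [Set.mem_setOf_eq, key]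
      exact pos_mul (nn_mem_pos (fun x => by simp; positivity)) hL
    have := le_cut hM hbdd hL2
    have hεc : c * (ε / c) = ε := by field_simp
    nlinarith

lemma cut_smul (c : ℝ) {r : A1 X} (hr : Bddf r) : cut M (cst c * r) = c * cut M r := by
  rcases lt_trichotomy c 0 with hc | hc | hc
  · have hco : (cst c * r : A1 X) = -(cst (-c) * r) := by
      apply Subtype.ext; funext x
      show c * r.1 x = -(-c * r.1 x)
      ring
    rw [hco, cut_neg hM ((Bddf.cst (-c)).mul hr), cut_smul_pos hM (by linarith) hr]
    ring
  · rw [hc, show (cst (0:ℝ) * r : A1 X) = cst 0 by rw [cst_zero]; ring, cut_cst hM, zero_mul]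
  · exact cut_smul_pos hM hc hr

lemma cut_mul {r r' : A1 X} (hr : Bddf r) (hr' : Bddf r') :
    cut M (r * r') = cut M r * cut M r' := by
  have hbdd : Bddf (r * r' : A1 X) := hr.mul hr'
  have key : ∀ ε : ℝ, 0 < ε → |cut M (r * r') - cut M r * cut M r'| ≤ ε * ε := by
    intro ε hε
    set a := cut M r - ε with ha
    set b := cut M r + ε with hb
    set a' := cut M r' - ε with ha'
    have hLa : a ∈ Lset M r := cut_sub_mem hM hr hε
    have hUb : b ∈ Uset M r := cut_add_mem_U hM hr hε
    have hLa' : a' ∈ Lset M r' := cut_sub_mem hM hr' hε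
    -- lower bound
    have wlo : (r * r' - (cst a * r' + cst a' * r - cst (a * a')) : A1 X)
        = (r - cst a) * (r' - cst a') := by
      apply Subtype.ext; funext x
      show r.1 x * r'.1 x - (a * r'.1 x + a' * r.1 x - a * a')
        = (r.1 x - a) * (r'.1 x - a')
      ring
    have hwlo : Bddf (cst a * r' + cst a' * r - cst (a * a') : A1 X) :=
      (((Bddf.cst a).mul hr').add ((Bddf.cst a').mul hr)).sub (Bddf.cst (a * a'))
    have hmono1 : cut M (cst a * r' + cst a' * r - cst (a * a') : A1 X) ≤ cut M (r * r') := by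
      apply cut_mono hM hwlo hbdd
      rw [wlo]; exact pos_mul hLa hLa'
    have hval1 : cut M (cst a * r' + cst a' * r - cst (a * a') : A1 X)
        = a * cut M r' + a' * cut M r - a * a' := by
      rw [show (cst a * r' + cst a' * r - cst (a * a') : A1 X)
        = (cst a * r' + cst a' * r) + (-(cst (a * a'))) by noncomm_ring]
      rw [cut_add hM (((Bddf.cst a).mul hr').add ((Bddf.cst a').mul hr)) (Bddf.cst (a*a')).neg,
        cut_add hM ((Bddf.cst a).mul hr') ((Bddf.cst a').mul hr),
        cut_neg hM (Bddf.cst (a*a')), cut_smul hM a hr', cut_smul hM a' hr, cut_cst hM]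
      ring
    -- upper bound
    have wup : ((cst b * r' + cst a' * r - cst (b * a')) - r * r' : A1 X)
        = (cst b - r) * (r' - cst a') := by
      apply Subtype.ext; funext x
      show (b * r'.1 x + a' * r.1 x - b * a') - r.1 x * r'.1 x
        = (b - r.1 x) * (r'.1 x - a')
      ring
    have hwup : Bddf (cst b * r' + cst a' * r - cst (b * a') : A1 X) :=
      (((Bddf.cst b).mul hr').add ((Bddf.cst a').mul hr)).sub (Bddf.cst (b * a'))
    have hmono2 : cut M (r * r') ≤ cut M (cst b * r' + cst a' * r - cst (b * a') : A1 X) := by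
      apply cut_mono hM hbdd hwup
      rw [wup]; exact pos_mul hUb hLa'
    have hval2 : cut M (cst b * r' + cst a' * r - cst (b * a') : A1 X)
        = b * cut M r' + a' * cut M r - b * a' := by
      rw [show (cst b * r' + cst a' * r - cst (b * a') : A1 X)
        = (cst b * r' + cst a' * r) + (-(cst (b * a'))) by noncomm_ring]
      rw [cut_add hM (((Bddf.cst b).mul hr').add ((Bddf.cst a').mul hr)) (Bddf.cst (b*a')).neg,
        cut_add hM ((Bddf.cst b).mul hr') ((Bddf.cst a').mul hr),
        cut_neg hM (Bddf.cst (b*a')), cut_smul hM b hr', cut_smul hM a' hr, cut_cst hM]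
      ring
    rw [abs_le]
    constructor
    · have : a * cut M r' + a' * cut M r - a * a' = cut M r * cut M r' - ε * ε := by
        rw [ha, ha']; ring
      rw [hval1, this] at hmono1
      linarith
    · have : b * cut M r' + a' * cut M r - b * a' = cut M r * cut M r' + ε * ε := by
        rw [hb, ha']; ring
      rw [hval2, this] at hmono2
      linarith
  by_contra hne
  have habs : 0 < |cut M (r * r') - cut M r * cut M r'| := by
    apply abs_pos.2
    intro h; exact hne (by linarith)
  set d := |cut M (r * r') - cut M r * cut M r'| with hd
  have hcase : d ≤ (min 1 (d/2)) * (min 1 (d/2)) :=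
    key _ (lt_min one_pos (by linarith))
  have h1 : min 1 (d/2) ≤ 1 := min_le_left _ _
  have h2 : min 1 (d/2) ≤ d/2 := min_le_right _ _
  have h3 : (0:ℝ) ≤ min 1 (d/2) := le_min zero_le_one (by linarith)
  nlinarith

end Cut
section Theta
variable {X : Type*} [TopologicalSpace X]

lemma star_le : baireOneStar X ≤ baireOne X := fun _ hf => hf.1

/-- inclusion of bounded Baire one into Baire one -/
def iota : B1s X →+* A1 X := Subring.inclusion star_le

@[simp] lemma iota_val (s : B1s X) (x : X) : (iota s).1 x = s.1 x := rfl

lemma bddf_iota (s : B1s X) : Bddf (iota s) := s.2.2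

/-- constants in the bounded ring -/
def cstB (c : ℝ) : B1s X := ⟨fun _ => c, baireOne.const_mem c, |c|, fun _ => le_refl _⟩

lemma iota_cstB (c : ℝ) : (iota (cstB c) : A1 X) = cst c := rfl

/-- absolute value in the bounded ring -/
def absB (s : B1s X) : B1s X :=
  ⟨fun x => |s.1 x|, baireOne.comp s.2.1 continuous_abs,
    s.2.2.choose, fun x => by simpa using s.2.2.choose_spec x⟩

lemma absB_sq (s : B1s X) : absB s * absB s = s * s := by
  apply Subtype.ext; funext x
  show |s.1 x| * |s.1 x| = s.1 x * s.1 x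
  rw [← abs_mul, abs_mul_self]

variable {M : Ideal (A1 X)} (hM : M.IsMaximal)

/-- the standard-part ring homomorphism `B₁*(X) → ℝ` attached to a maximal ideal of `B₁(X)` -/
noncomputable def thetaHom (hM : M.IsMaximal) : B1s X →+* ℝ where
  toFun s := cut M (iota s)
  map_one' := by
    show cut M (iota 1) = 1
    rw [map_one, show (1 : A1 X) = cst 1 from rfl, cut_cst hM]
  map_zero' := by
    show cut M (iota 0) = 0
    rw [map_zero, show (0 : A1 X) = cst 0 from rfl, cut_cst hM]
  map_add' s s' := by
    show cut M (iota (s + s')) = cut M (iota s) + cut M (iota s')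
    rw [map_add, cut_add hM (bddf_iota s) (bddf_iota s')]
  map_mul' s s' := by
    show cut M (iota (s * s')) = cut M (iota s) * cut M (iota s')
    rw [map_mul, cut_mul hM (bddf_iota s) (bddf_iota s')]

lemma thetaHom_apply (s : B1s X) : thetaHom hM s = cut M (iota s) := rfl

lemma thetaHom_surj : Function.Surjective (thetaHom hM) :=
  fun c => ⟨cstB c, by rw [thetaHom_apply, iota_cstB, cut_cst hM]⟩

lemma thetaHom_ker_max : (RingHom.ker (thetaHom hM)).IsMaximal :=
  RingHom.ker_isMaximal_of_surjective _ (thetaHom_surj hM)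

lemma theta_zero_of_mem {s : B1s X} (h : iota s ∈ M) : thetaHom hM s = 0 :=
  cut_mem_zero hM h (bddf_iota s)

lemma theta_abs_nonneg (s : B1s X) : 0 ≤ thetaHom hM (absB s) :=
  le_cut hM (bddf_iota _) (L_of_nn (fun x => abs_nonneg _))

lemma theta_abs (s : B1s X) : thetaHom hM (absB s) = |thetaHom hM s| := by
  have h2 : thetaHom hM (absB s) * thetaHom hM (absB s) = thetaHom hM s * thetaHom hM s := by
    rw [← map_mul, ← map_mul, absB_sq]
  rcases mul_self_eq_mul_self_iff.1 h2 with h | h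
  · rcases abs_cases (thetaHom hM s) with ⟨he, _⟩ | ⟨he, _⟩
    · rw [he]; exact h
    · rw [he]; have := theta_abs_nonneg hM s; linarith [h ▸ this]
  · rcases abs_cases (thetaHom hM s) with ⟨he, _⟩ | ⟨he, _⟩
    · have := theta_abs_nonneg hM s; rw [he]; linarith [h ▸ this]
    · rw [he]; exact h

end Theta
section Phi
variable {X : Type*} [TopologicalSpace X]

/-- the canonical map between the structure spaces -/
noncomputable def phi : StructSpace (A1 X) → StructSpace (B1s X) :=
  fun Mp => ⟨RingHom.ker (thetaHom Mp.2), thetaHom_ker_max Mp.2⟩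

lemma cont_ratio : Continuous fun t : ℝ => t ^ 2 / (1 + t ^ 2) :=
  (continuous_pow 2).div (continuous_const.add (continuous_pow 2)) (fun t => by positivity)

/-- the basic "small" witness attached to an element of a maximal ideal -/
noncomputable def wit (m : A1 X) : B1s X :=
  ⟨fun x => (m.1 x) ^ 2 / (1 + (m.1 x) ^ 2),
    baireOne.comp m.2 cont_ratio, 1, fun x => by
      rw [abs_of_nonneg (by positivity)]
      rw [div_le_one (by positivity)]
      nlinarith [sq_nonneg (m.1 x)]⟩

lemma iota_wit_mem {M : Ideal (A1 X)} {m : A1 X} (hm : m ∈ M) : iota (wit m) ∈ M := by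
  have hinv : (fun x => (1 + (m.1 x) ^ 2)⁻¹) ∈ baireOne X :=
    baireOne.comp m.2 ((continuous_const.add (continuous_pow 2)).inv₀ (fun t => (by positivity : (0:ℝ) < 1 + t ^ 2).ne'))
  have key : iota (wit m) = m * (m * ⟨_, hinv⟩) := by
    apply Subtype.ext; funext x
    show (m.1 x) ^ 2 / (1 + (m.1 x) ^ 2) = m.1 x * (m.1 x * (1 + (m.1 x) ^ 2)⁻¹)
    field_simp
  rw [key]
  exact Ideal.mul_mem_right _ _ hm

lemma wit_lower {u v : ℝ} (huv : u + v = 1) :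
    (1:ℝ)/5 ≤ u ^ 2 / (1 + u ^ 2) + v ^ 2 / (1 + v ^ 2) := by
  have h1 : (0:ℝ) < 1 + u ^ 2 := by positivity
  have h2 : (0:ℝ) < 1 + v ^ 2 := by positivity
  rw [div_add_div _ _ (ne_of_gt h1) (ne_of_gt h2), le_div_iff₀ (by positivity)]
  nlinarith [sq_nonneg (u - v), sq_nonneg (u * v), sq_nonneg (u + v), sq_nonneg (u*v - 1)]

lemma phi_inj : Function.Injective (phi (X := X)) := by
  rintro ⟨M, hM⟩ ⟨M', hM'⟩ h
  have hker : RingHom.ker (thetaHom hM) = RingHom.ker (thetaHom hM') := by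
    simpa [phi] using congrArg Subtype.val h
  by_contra hne
  have hMM' : M ≠ M' := fun hc => hne (Subtype.ext hc)
  have hsup : M ⊔ M' = ⊤ := hM.coprime_of_ne hM' hMM'
  obtain ⟨m, hmM, m', hm'M', hsum⟩ := Submodule.mem_sup.1 (hsup ▸ Submodule.mem_top :
    (1 : A1 X) ∈ M ⊔ M')
  have h1 : thetaHom hM (wit m) = 0 := theta_zero_of_mem hM (iota_wit_mem hmM)
  have h2 : thetaHom hM' (wit m) = 0 := by
    have : wit m ∈ RingHom.ker (thetaHom hM') := hker ▸ (by
      rw [RingHom.mem_ker]; exact h1)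
    rwa [RingHom.mem_ker] at this
  have h3 : thetaHom hM' (wit m') = 0 := theta_zero_of_mem hM' (iota_wit_mem hm'M')
  have hlow : (1:ℝ)/5 ≤ thetaHom hM' (wit m + wit m') := by
    rw [thetaHom_apply]
    apply le_cut hM' (bddf_iota _)
    apply L_of_nn
    intro x
    have hx : m.1 x + m'.1 x = 1 := by
      have := congrArg (fun r : A1 X => r.1 x) hsum
      simpa using this
    exact wit_lower hx
  rw [map_add, h2, h3] at hlow
  norm_num at hlow

/-- the truncation witnesses used for surjectivity -/
noncomputable def ppart (s : B1s X) (n : ℕ) : A1 X :=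
  ⟨fun x => max ((n + 1) * |s.1 x| - 1) 0,
    baireOne.comp s.2.1 (((continuous_const.mul continuous_abs).sub continuous_const).max
      continuous_const)⟩

lemma unit_star {σ : B1s X} (h : ∀ x, 1 ≤ σ.1 x) : ∀ N : Ideal (B1s X), N.IsMaximal → σ ∉ N := by
  intro N hN hmem
  have hinv : (fun x => (max (σ.1 x) 1)⁻¹) ∈ baireOne X :=
    baireOne.comp σ.2.1 ((continuous_id.max continuous_const).inv₀
      (fun t => by have : (0:ℝ) < max t 1 := lt_of_lt_of_le one_pos (le_max_right _ _); positivity))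
  have hone : σ * (⟨_, hinv, 1, fun x => by
      rw [abs_of_nonneg (by positivity)]
      rw [inv_le_one_iff₀]
      right; exact le_max_right _ _⟩ : B1s X) = 1 := by
    apply Subtype.ext; funext x
    show σ.1 x * (max (σ.1 x) 1)⁻¹ = 1
    rw [max_eq_left (h x)]
    exact mul_inv_cancel₀ (by have := h x; linarith)
  have : (1 : B1s X) ∈ N := by rw [← hone]; exact Ideal.mul_mem_right _ _ hmem
  exact hN.ne_top ((Ideal.eq_top_iff_one _).2 this)

lemma vsumA {ι : Type*} (t : Finset ι) (f : ι → A1 X) (x : X) :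
    (∑ i ∈ t, f i).1 x = ∑ i ∈ t, (f i).1 x := by
  have : ((∑ i ∈ t, f i : A1 X) : X → ℝ) = ∑ i ∈ t, ((f i : X → ℝ)) :=
    AddSubmonoidClass.coe_finset_sum f t
  rw [show (∑ i ∈ t, f i).1 x = ((∑ i ∈ t, f i : A1 X) : X → ℝ) x from rfl, this]
  exact Finset.sum_apply x t _

lemma vsumB {ι : Type*} (t : Finset ι) (f : ι → B1s X) (x : X) :
    (∑ i ∈ t, f i).1 x = ∑ i ∈ t, (f i).1 x := by
  have : ((∑ i ∈ t, f i : B1s X) : X → ℝ) = ∑ i ∈ t, ((f i : X → ℝ)) :=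
    AddSubmonoidClass.coe_finset_sum f t
  rw [show (∑ i ∈ t, f i).1 x = ((∑ i ∈ t, f i : B1s X) : X → ℝ) x from rfl, this]
  exact Finset.sum_apply x t _

lemma phi_surj : Function.Surjective (phi (X := X)) := by
  rintro ⟨N, hN⟩
  set Egen : Set (A1 X) := {e | ∃ s ∈ N, ∃ n : ℕ, e = ppart s n} with hEgen
  have hproper : Ideal.span Egen ≠ ⊤ := by
    intro htop
    have h1 : (1 : A1 X) ∈ Ideal.span Egen := htop ▸ Submodule.mem_top
    obtain ⟨c, hsupp, hsum⟩ := Submodule.mem_span_set.mp h1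
    have hchoice : ∀ e ∈ c.support, ∃ s : B1s X, s ∈ N ∧ ∃ n : ℕ, e = ppart s n := by
      intro e he
      obtain ⟨s, hs, n, he⟩ := hsupp he
      exact ⟨s, hs, n, he⟩
    haveI : Nonempty (B1s X) := ⟨1⟩
    choose! sfun hsmem nfun hef using hchoice
    set σ : B1s X := ∑ e ∈ c.support, (cstB (((nfun e : ℝ) + 1) ^ 2)) * (sfun e * sfun e)
      with hσ
    have hσN : σ ∈ N := Ideal.sum_mem _ (fun e he =>
      Ideal.mul_mem_left _ _ (Ideal.mul_mem_right _ _ (hsmem e he)))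
    have hσ1 : ∀ x, 1 ≤ σ.1 x := by
      intro x
      have hval : (1:ℝ) = ∑ e ∈ c.support, (c e).1 x * e.1 x := by
        have h := congrArg (fun r : A1 X => r.1 x) hsum
        simp only [Finsupp.sum, smul_eq_mul] at h
        rw [vsumA] at h
        simpa using h.symm
      obtain ⟨e, he, hne⟩ := Finset.exists_ne_zero_of_sum_ne_zero
        (by rw [← hval]; norm_num : ∑ e ∈ c.support, (c e).1 x * e.1 x ≠ 0)
      have hex : e.1 x ≠ 0 := fun h0 => hne (by rw [h0, mul_zero])
      have hval2 : e.1 x = (ppart (sfun e) (nfun e)).1 x :=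
        congrArg (fun r : A1 X => r.1 x) (hef e he)
      rw [show (ppart (sfun e) (nfun e)).1 x
        = max (((nfun e : ℝ) + 1) * |(sfun e).1 x| - 1) 0 from rfl] at hval2
      have hterm : (1:ℝ) ≤ (((nfun e : ℝ) + 1) ^ 2) * ((sfun e).1 x * (sfun e).1 x) := by
        have hpos : 0 < ((nfun e : ℝ) + 1) * |(sfun e).1 x| - 1 := by
          by_contra hle
          push_neg at hle
          rw [hval2, max_eq_right hle] at hex
          exact hex rfl
        have h1' : 1 ≤ ((nfun e : ℝ) + 1) * |(sfun e).1 x| := by linarith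
        calc (1:ℝ) = 1 * 1 := by norm_num
        _ ≤ (((nfun e : ℝ) + 1) * |(sfun e).1 x|) * (((nfun e : ℝ) + 1) * |(sfun e).1 x|) :=
            mul_le_mul h1' h1' one_pos.le (by positivity)
        _ = (((nfun e : ℝ) + 1) ^ 2) * (|(sfun e).1 x| * |(sfun e).1 x|) := by ring
        _ = (((nfun e : ℝ) + 1) ^ 2) * ((sfun e).1 x * (sfun e).1 x) := by
            rw [abs_mul_abs_self]
      have hσval : σ.1 x
          = ∑ e ∈ c.support, (((nfun e : ℝ) + 1) ^ 2) * ((sfun e).1 x * (sfun e).1 x) := by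
        rw [hσ, vsumB]
        rfl
      rw [hσval]
      refine le_trans hterm (Finset.single_le_sum
        (f := fun e => (((nfun e : ℝ) + 1) ^ 2) * ((sfun e).1 x * (sfun e).1 x))
        (fun i _ => mul_nonneg (by positivity) (mul_self_nonneg _)) he)
    exact unit_star hσ1 N hN hσN
  obtain ⟨M, hM, hle⟩ := Ideal.exists_le_maximal _ hproper
  refine ⟨⟨M, hM⟩, ?_⟩
  have hsub : N ≤ RingHom.ker (thetaHom hM) := by
    intro s hs
    rw [RingHom.mem_ker]
    have habs : thetaHom hM (absB s) = 0 := by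
      have hub : ∀ n : ℕ, thetaHom hM (absB s) ≤ 1 / (n + 1) := by
        intro n
        have heM : ppart s n ∈ M := hle (Ideal.subset_span ⟨s, hs, n, rfl⟩)
        rw [thetaHom_apply]
        apply cut_le hM (bddf_iota _)
        refine ⟨cst (1/(n+1)) * (ppart s n + 1) - iota (absB s), ?_, ?_⟩
        · intro x
          show 0 ≤ 1/((n:ℝ)+1) * (max ((n + 1) * |s.1 x| - 1) 0 + 1) - |s.1 x|
          have hn : (0:ℝ) < n + 1 := by positivity
          rcases le_or_gt (((n:ℝ) + 1) * |s.1 x| - 1) 0 with hc | hc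
          · rw [max_eq_right hc]
            have h2 : |s.1 x| ≤ 1/((n:ℝ)+1) := by
              rw [le_div_iff₀ hn]
              nlinarith
            linarith
          · rw [max_eq_left hc.le]
            have : 1/((n:ℝ)+1) * (((n:ℝ) + 1) * |s.1 x| - 1 + 1) = |s.1 x| := by
              field_simp
              ring
            rw [this]
            simp
        · have : (cst (1/(n+1)) - iota (absB s)) - (cst (1/(n+1)) * (ppart s n + 1) - iota (absB s))
              = -(cst (1/((n:ℝ)+1)) * ppart s n) := by ring
          rw [this]
          exact neg_mem (Ideal.mul_mem_left _ _ heM)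
      have hlb := theta_abs_nonneg hM s
      by_contra hne0
      have hpos : 0 < thetaHom hM (absB s) := lt_of_le_of_ne hlb (Ne.symm hne0)
      obtain ⟨n, hn⟩ := exists_nat_one_div_lt hpos
      exact absurd (hub n) (by push_cast; linarith)
    have hsq : thetaHom hM s * thetaHom hM s = 0 := by
      rw [← map_mul, ← absB_sq, map_mul, habs, mul_zero]
    exact mul_self_eq_zero.1 hsq
  apply Subtype.ext
  show RingHom.ker (thetaHom hM) = N
  exact ((hN.eq_of_le (thetaHom_ker_max hM).ne_top hsub)).symm

end Phi
section Topo
variable {X : Type*} [TopologicalSpace X]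

lemma isOpen_VA (f : A1 X) : IsOpen {M : StructSpace (A1 X) | f ∉ M.1} :=
  TopologicalSpace.GenerateOpen.basic _ ⟨f, rfl⟩

lemma isOpen_VB (s : B1s X) : IsOpen {N : StructSpace (B1s X) | s ∉ N.1} :=
  TopologicalSpace.GenerateOpen.basic _ ⟨s, rfl⟩

/-- truncations for continuity of `phi` -/
noncomputable def hfun (s : B1s X) (n : ℕ) : A1 X :=
  ⟨fun x => max (|s.1 x| - 1/((n:ℝ)+1)) 0,
    baireOne.comp s.2.1 ((continuous_abs.sub continuous_const).max continuous_const)⟩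

lemma hfun_mem_of_theta_zero {M : Ideal (A1 X)} (hM : M.IsMaximal) {s : B1s X}
    (h0 : thetaHom hM s = 0) (n : ℕ) : hfun s n ∈ M := by
  have habs : thetaHom hM (absB s) = 0 := by rw [theta_abs hM, h0, abs_zero]
  have hk : (fun x => min (2*((n:ℝ)+1)*|s.1 x|) 1) ∈ baireOne X :=
    baireOne.comp s.2.1 ((continuous_const.mul continuous_abs).min continuous_const)
  set k : A1 X := ⟨_, hk⟩ with hkdef
  have hzero : hfun s n * (1 - k) = 0 := by
    apply Subtype.ext; funext x
    show max (|s.1 x| - 1/((n:ℝ)+1)) 0 * (1 - min (2*((n:ℝ)+1)*|s.1 x|) 1) = 0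
    have hn : (0:ℝ) < (n:ℝ) + 1 := by positivity
    rcases le_or_gt (|s.1 x|) (1/((n:ℝ)+1)) with hc | hc
    · rw [max_eq_right (by linarith), zero_mul]
    · have h2 : (1:ℝ) ≤ 2*((n:ℝ)+1)*|s.1 x| := by
        rw [div_lt_iff₀ hn] at hc
        nlinarith
      rw [min_eq_right h2, sub_self, mul_zero]
  have hmem0 : hfun s n * (1 - k) ∈ M := by rw [hzero]; exact Ideal.zero_mem _
  rcases hM.isPrime.mem_or_mem hmem0 with h | h
  · exact h
  · exfalso
    have hbk : Bddf k := ⟨1, fun x => by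
      show |min (2*((n:ℝ)+1)*|s.1 x|) 1| ≤ 1
      rw [abs_of_nonneg (le_min (by positivity) one_pos.le)]
      exact min_le_right _ _⟩
    have hb1k : Bddf (1 - k : A1 X) := ((Bddf.cst 1).sub hbk :)
    have hcut1k : cut M (1 - k) = 0 := cut_mem_zero hM h hb1k
    have hcutk : cut M k = 1 := by
      have := cut_add hM hbk hb1k
      rw [show (k + (1 - k) : A1 X) = cst 1 by rw [show (cst 1 : A1 X) = 1 from rfl]; ring,
        cut_cst hM, hcut1k] at this
      linarith
    have hle1 : cut M k ≤ 2*((n:ℝ)+1) * cut M (iota (absB s)) := by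
      have hmono : cut M k ≤ cut M (cst (2*((n:ℝ)+1)) * iota (absB s)) := by
        apply cut_mono hM hbk ((Bddf.cst _).mul (bddf_iota _))
        apply nn_mem_pos
        intro x
        show 0 ≤ 2*((n:ℝ)+1) * |s.1 x| - min (2*((n:ℝ)+1)*|s.1 x|) 1
        have := min_le_left (2*((n:ℝ)+1)*|s.1 x|) 1
        linarith
      rwa [cut_smul hM _ (bddf_iota _)] at hmono
    rw [show cut M (iota (absB s)) = thetaHom hM (absB s) from rfl, habs, mul_zero] at hle1
    linarith [hcutk ▸ hle1]

lemma theta_ne_zero_of_hfun_not_mem {M : Ideal (A1 X)} (hM : M.IsMaximal) {s : B1s X}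
    {n : ℕ} (h : hfun s n ∉ M) : thetaHom hM s ≠ 0 := fun h0 => h (hfun_mem_of_theta_zero hM h0 n)

lemma hfun_not_mem_of_theta_ne_zero {M : Ideal (A1 X)} (hM : M.IsMaximal) {s : B1s X}
    (h : thetaHom hM s ≠ 0) : ∃ n : ℕ, hfun s n ∉ M := by
  have hpos : 0 < thetaHom hM (absB s) := by
    rcases lt_or_eq_of_le (theta_abs_nonneg hM s) with h' | h'
    · exact h'
    · exfalso; apply h
      have := theta_abs hM s
      rw [← h'] at this
      exact abs_eq_zero.1 this.symm
  obtain ⟨n, hn⟩ := exists_nat_one_div_lt hpos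
  refine ⟨n, fun hmem => ?_⟩
  have hub : thetaHom hM (absB s) ≤ 1/((n:ℝ)+1) := by
    rw [thetaHom_apply]
    apply cut_le hM (bddf_iota _)
    refine ⟨cst (1/((n:ℝ)+1)) + hfun s n - iota (absB s), ?_, ?_⟩
    · intro x
      show 0 ≤ 1/((n:ℝ)+1) + max (|s.1 x| - 1/((n:ℝ)+1)) 0 - |s.1 x|
      rcases le_or_gt (|s.1 x|) (1/((n:ℝ)+1)) with hc | hc
      · rw [max_eq_right (by linarith)]; linarith
      · rw [max_eq_left (by linarith)]; linarith
    · have : (cst (1/((n:ℝ)+1)) - iota (absB s))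
          - (cst (1/((n:ℝ)+1)) + hfun s n - iota (absB s)) = -(hfun s n) := by ring
      rw [this]
      exact neg_mem hmem
  push_cast at hn hub
  linarith

lemma phi_preimage (s : B1s X) :
    phi ⁻¹' {N : StructSpace (B1s X) | s ∉ N.1}
      = ⋃ n : ℕ, {M : StructSpace (A1 X) | hfun s n ∉ M.1} := by
  ext ⟨M, hM⟩
  refine Iff.trans ?_ (Set.mem_iUnion (x := (⟨M, hM⟩ : StructSpace (A1 X)))
    (s := fun n : ℕ => {M : StructSpace (A1 X) | hfun s n ∉ M.1})).symm
  show s ∉ (phi ⟨M, hM⟩).1 ↔ ∃ n : ℕ, hfun s n ∉ M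
  constructor
  · intro h
    have : thetaHom hM s ≠ 0 := by
      intro h0
      exact h (by rw [show (phi ⟨M, hM⟩).1 = RingHom.ker (thetaHom hM) from rfl,
        RingHom.mem_ker]; exact h0)
    exact hfun_not_mem_of_theta_ne_zero hM this
  · rintro ⟨n, hn⟩ hmem
    have h0 : thetaHom hM s = 0 := by
      rw [show (phi ⟨M, hM⟩).1 = RingHom.ker (thetaHom hM) from rfl, RingHom.mem_ker] at hmem
      exact hmem
    exact hn (hfun_mem_of_theta_zero hM h0 n)

lemma phi_continuous : Continuous (phi (X := X)) := by
  apply continuous_generateFrom_iff.mpr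
  rintro U ⟨s, rfl⟩
  rw [phi_preimage]
  exact isOpen_iUnion (fun n => isOpen_VA _)

end Topo
section Final
variable {X : Type*} [TopologicalSpace X]

/-- the bijection between the structure spaces -/
noncomputable def eqv (X : Type*) [TopologicalSpace X] :
    StructSpace (A1 X) ≃ StructSpace (B1s X) :=
  Equiv.ofBijective phi ⟨phi_inj, phi_surj⟩

/-- the witness used for openness of images of basic opens -/
noncomputable def sWit (m' : A1 X) : B1s X :=
  ⟨fun x => max (1 - |m'.1 x|) 0,
    baireOne.comp m'.2 ((continuous_const.sub continuous_abs).max continuous_const),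
    1, fun x => by
      rw [abs_of_nonneg (le_max_right _ _)]
      apply max_le _ one_pos.le
      have := abs_nonneg (m'.1 x)
      linarith⟩

lemma theta_sWit_ge_one {M : Ideal (A1 X)} (hM : M.IsMaximal) {m' : A1 X} (hm' : m' ∈ M) :
    1 ≤ thetaHom hM (sWit m') := by
  have hmink : (fun x => min (|m'.1 x|) 1) ∈ baireOne X :=
    baireOne.comp m'.2 (continuous_abs.min continuous_const)
  set mink : A1 X := ⟨_, hmink⟩ with hminkdef
  have hminkM : mink ∈ M := by
    apply convex hM (fun x => le_min (abs_nonneg _) one_pos.le)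
      (b := ⟨fun x => |m'.1 x|, baireOne.comp m'.2 continuous_abs⟩)
      (fun x => min_le_left _ _) (abs_mem hM hm')
  rw [thetaHom_apply]
  apply le_cut hM (bddf_iota _)
  refine ⟨iota (sWit m') - cst 1 + mink, ?_, ?_⟩
  · intro x
    show 0 ≤ max (1 - |m'.1 x|) 0 - 1 + min (|m'.1 x|) 1
    rcases le_total (|m'.1 x|) 1 with hc | hc
    · rw [max_eq_left (by linarith), min_eq_left hc]; linarith
    · rw [max_eq_right (by linarith), min_eq_right hc]; linarith
  · have : (iota (sWit m') - cst 1) - (iota (sWit m') - cst 1 + mink) = -mink := by ring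
    rw [this]
    exact neg_mem hminkM

lemma sWit_le (f r : A1 X) (x : X) : |(sWit (r * f - 1)).1 x| ≤ |(r * f).1 x| := by
  show |max (1 - |r.1 x * f.1 x - 1|) 0| ≤ |r.1 x * f.1 x|
  set u := r.1 x * f.1 x
  rw [abs_of_nonneg (le_max_right _ _)]
  apply max_le _ (abs_nonneg u)
  rcases abs_cases (u - 1) with ⟨he, _⟩ | ⟨he, _⟩ <;> rcases abs_cases u with ⟨hu, _⟩ | ⟨hu, _⟩ <;>
    linarith

lemma psi_continuous : Continuous (eqv X).symm := by
  apply continuous_generateFrom_iff.mpr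
  rintro U ⟨f, rfl⟩
  rw [isOpen_iff_forall_mem_open]
  intro N₀ hN₀
  set M₀ := (eqv X).symm N₀ with hM₀def
  have hphiM₀ : phi M₀ = N₀ := (eqv X).apply_symm_apply N₀
  have hfM₀ : f ∉ M₀.1 := hN₀
  obtain ⟨r, i, hiM, hri⟩ := M₀.2.exists_inv hfM₀
  set m' : A1 X := r * f - 1 with hm'def
  have hm' : m' ∈ M₀.1 := by
    have : m' = -i := by rw [hm'def, ← hri]; ring
    rw [this]
    exact neg_mem hiM
  set s := sWit m' with hsdef
  refine ⟨{N : StructSpace (B1s X) | s ∉ N.1}, ?_, isOpen_VB s, ?_⟩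
  · intro N hN
    show f ∉ ((eqv X).symm N).1
    set M₁ := (eqv X).symm N with hM₁def
    have hphiM₁ : phi M₁ = N := (eqv X).apply_symm_apply N
    intro hf
    apply hN
    have hrf : r * f ∈ M₁.1 := Ideal.mul_mem_left _ _ hf
    have hiotas : iota s ∈ M₁.1 := abs_convex M₁.2 (fun x => sWit_le f r x) hrf
    have : s ∈ (phi M₁).1 := by
      show s ∈ RingHom.ker (thetaHom M₁.2)
      rw [RingHom.mem_ker]
      exact theta_zero_of_mem M₁.2 hiotas
    rw [hphiM₁] at this
    exact this
  · show s ∉ N₀.1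
    intro hmem
    rw [← hphiM₀] at hmem
    have : thetaHom M₀.2 s = 0 := by
      rw [show (phi M₀).1 = RingHom.ker (thetaHom M₀.2) from rfl, RingHom.mem_ker] at hmem
      exact hmem
    have := theta_sWit_ge_one M₀.2 hm'
    linarith [this, ‹thetaHom M₀.2 s = 0›]

end Final
/-- For a `T₄` space `X`, the structure space of `B₁(X)` is homeomorphic to the
structure space of `B₁*(X)`. -/
theorem structSpace_baireOne_homeomorph_structSpace_baireOneStar
    (X : Type*) [TopologicalSpace X] [T4Space X] :
    Nonempty (StructSpace ↥(baireOne X) ≃ₜ StructSpace ↥(baireOneStar X)) := by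
  exact ⟨{ toEquiv := eqv X, continuous_toFun := phi_continuous, continuous_invFun := psi_continuous }⟩
end

section
/- Let (X, τ) be a T_4 space (normal and Hausdorff) and let σ be the topology on X having {Z(f) : f ∈ B_1(X, τ)} as a base for its closed sets. Then (X, σ) is compact if and only if every maximal ideal of B_1(X, τ) is fixed. -/
open Filter Topology

/-- The topology `σ` on `X` having the zero sets of Baire one functions as a base for
its closed sets. -/
def sigmaTop (X : Type*) [TopologicalSpace X] : TopologicalSpace X :=
  TopologicalSpace.generateFrom {U : Set X | ∃ f ∈ baireOne X, U = {x | f x ≠ 0}}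

/-- The pointwise inverse of a positive Baire one function is Baire one. -/
lemma baireOne_inv_of_pos {X : Type*} [TopologicalSpace X] {h : X → ℝ}
    (hh : h ∈ baireOne X) (hpos : ∀ x, 0 < h x) :
    (fun x => (h x)⁻¹) ∈ baireOne X := by
  obtain ⟨H, hH⟩ := hh
  refine ⟨fun n => ⟨fun x => (max (H n x) (1 / (n + 1)))⁻¹, ?_⟩, ?_⟩
  · refine (((H n).continuous.max continuous_const).inv₀ ?_)
    intro x
    have h1 : (0:ℝ) < 1 / (n + 1) := by positivity
    exact (lt_max_of_lt_right h1).ne'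
  · intro x
    have h1 : Tendsto (fun n : ℕ => max (H n x) (1 / (n + 1 : ℝ))) atTop (𝓝 (h x)) := by
      have := (hH x).max tendsto_one_div_add_atTop_nhds_zero_nat
      simpa [max_eq_left (hpos x).le] using this
    exact h1.inv₀ (hpos x).ne'

/-- A nowhere-vanishing Baire one function is a unit of the ring of Baire one functions. -/
lemma baireOne_isUnit_of_nonvanishing {X : Type*} [TopologicalSpace X]
    {f : ↥(baireOne X)} (hf : ∀ x, (f : X → ℝ) x ≠ 0) : IsUnit f := by
  have hsq : ((f : X → ℝ) * (f : X → ℝ)) ∈ baireOne X := mul_mem f.2 f.2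
  have h2 : (fun x => ((f : X → ℝ) x * (f : X → ℝ) x)⁻¹) ∈ baireOne X :=
    baireOne_inv_of_pos hsq fun x => mul_self_pos.2 (hf x)
  have hg : (fun x => (f : X → ℝ) x * ((f : X → ℝ) x * (f : X → ℝ) x)⁻¹) ∈ baireOne X :=
    mul_mem f.2 h2
  refine IsUnit.of_mul_eq_one (a := f) ⟨_, hg⟩ ?_
  apply Subtype.ext
  funext x
  have hx := hf x
  show (f : X → ℝ) x * ((f : X → ℝ) x * ((f : X → ℝ) x * (f : X → ℝ) x)⁻¹) = 1
  field_simp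

/-- For a `T₄` space `(X, τ)`, the space `(X, σ)` is compact iff every maximal ideal of
`B₁(X, τ)` is fixed. -/
theorem sigma_compact_iff_all_maximal_fixed
    (X : Type*) [TopologicalSpace X] [T4Space X] :
    @CompactSpace X (sigmaTop X) ↔
      ∀ M : Ideal ↥(baireOne X), M.IsMaximal →
        (⋂ f ∈ (M : Set ↥(baireOne X)), {x : X | (f : X → ℝ) x = 0}).Nonempty := by
  have hZclosed : ∀ f : ↥(baireOne X),
      IsClosed[sigmaTop X] {x : X | (f : X → ℝ) x = 0} := by
    intro f
    have : IsOpen[sigmaTop X] {x : X | (f : X → ℝ) x ≠ 0} :=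
      TopologicalSpace.GenerateOpen.basic _ ⟨(f : X → ℝ), f.2, rfl⟩
    have hc : {x : X | (f : X → ℝ) x = 0} = {x : X | (f : X → ℝ) x ≠ 0}ᶜ := by
      ext x; simp
    rw [hc]
    exact @IsOpen.isClosed_compl X (sigmaTop X) _ this
  haveI : Nonempty ↥(baireOne X) := ⟨1⟩
  classical
  constructor
  · intro hcomp M hM
    by_contra hemp
    rw [Set.not_nonempty_iff_eq_empty] at hemp
    -- index the zero sets of members of M
    have hcompact : @IsCompact X (sigmaTop X) Set.univ :=
      @isCompact_univ X (sigmaTop X) hcomp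
    have hemp' : (Set.univ : Set X) ∩
        ⋂ i : (M : Set ↥(baireOne X)), {x : X | ((i : ↥(baireOne X)) : X → ℝ) x = 0}
          = ∅ := by
      rw [Set.univ_inter, ← hemp]
      ext x
      simp [Set.mem_iInter]
    obtain ⟨u, hu⟩ := @IsCompact.elim_finite_subfamily_closed X (sigmaTop X) Set.univ
      (M : Set ↥(baireOne X)) hcompact
      (fun i => {x : X | ((i : ↥(baireOne X)) : X → ℝ) x = 0})
      (fun i => hZclosed i) hemp'
    -- the sum of squares over u belongs to M and vanishes nowhere on ⋂, contradiction
    set g : ↥(baireOne X) := ∑ i ∈ u, (i : ↥(baireOne X)) * (i : ↥(baireOne X)) with hgdef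
    have hgM : g ∈ M := Ideal.sum_mem M fun i _ => M.mul_mem_left _ i.2
    have hgz : ∃ x, (g : X → ℝ) x = 0 := by
      by_contra hnz
      push_neg at hnz
      exact hM.ne_top (M.eq_top_of_isUnit_mem hgM
        (baireOne_isUnit_of_nonvanishing hnz))
    obtain ⟨x, hx⟩ := hgz
    have hxg : ∀ i ∈ u, ((i : ↥(baireOne X)) : X → ℝ) x = 0 := by
      have hcoe : (g : X → ℝ) x =
          ∑ i ∈ u, ((i : ↥(baireOne X)) : X → ℝ) x * ((i : ↥(baireOne X)) : X → ℝ) x := by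
        rw [hgdef]
        induction u using Finset.induction with
        | empty => simp
        | insert hni ih => simp_all [Finset.sum_insert]
      rw [hcoe] at hx
      have := (Finset.sum_eq_zero_iff_of_nonneg (s := u)
        (f := fun i : (M : Set ↥(baireOne X)) =>
          ((i : ↥(baireOne X)) : X → ℝ) x * ((i : ↥(baireOne X)) : X → ℝ) x)
        (fun i _ => mul_self_nonneg (((i : ↥(baireOne X)) : X → ℝ) x))).1 hx
      intro i hi
      have := this i hi
      nlinarith [this]
    have : x ∈ (Set.univ : Set X) ∩
        ⋂ i ∈ u, {y : X | ((i : ↥(baireOne X)) : X → ℝ) y = 0} := by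
      refine ⟨trivial, ?_⟩
      simp only [Set.mem_iInter]
      intro i hi
      exact hxg i hi
    rw [hu] at this
    exact this
  · intro hfix
    refine @CompactSpace.mk X (sigmaTop X) ?_
    rw [@isCompact_iff_ultrafilter_le_nhds X (sigmaTop X)]
    intro F _
    -- the ideal of Baire one functions whose zero set is in F
    let I : Ideal ↥(baireOne X) :=
      { carrier := {f | {x : X | (f : X → ℝ) x = 0} ∈ F}
        zero_mem' := by
          show {x : X | ((0 : ↥(baireOne X)) : X → ℝ) x = 0} ∈ F
          have h0 : {x : X | ((0 : ↥(baireOne X)) : X → ℝ) x = 0} = Set.univ := by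
            ext x; simp [show ((0 : ↥(baireOne X)) : X → ℝ) x = 0 from rfl]
          rw [h0]; exact Filter.univ_mem
        add_mem' := by
          intro f g hf hg
          refine Filter.mem_of_superset (Filter.inter_mem hf hg) ?_
          rintro x ⟨hxf, hxg⟩
          show ((f + g : ↥(baireOne X)) : X → ℝ) x = 0
          have : ((f + g : ↥(baireOne X)) : X → ℝ) x = (f : X → ℝ) x + (g : X → ℝ) x := rfl
          rw [this, hxf, hxg, add_zero]
        smul_mem' := by
          intro c f hf
          refine Filter.mem_of_superset hf ?_
          intro x hx
          show ((c * f : ↥(baireOne X)) : X → ℝ) x = 0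
          have : ((c * f : ↥(baireOne X)) : X → ℝ) x = (c : X → ℝ) x * (f : X → ℝ) x := rfl
          rw [this, hx, mul_zero] }
    have hItop : I ≠ ⊤ := by
      intro h
      have h1 : (1 : ↥(baireOne X)) ∈ I := h ▸ Submodule.mem_top
      have : {x : X | ((1 : ↥(baireOne X)) : X → ℝ) x = 0} ∈ F := h1
      have he : {x : X | ((1 : ↥(baireOne X)) : X → ℝ) x = 0} = ∅ := by
        ext x
        simp [show ((1 : ↥(baireOne X)) : X → ℝ) x = 1 from rfl]
      rw [he] at this
      exact F.empty_notMem this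
    obtain ⟨M, hM, hIM⟩ := Ideal.exists_le_maximal I hItop
    obtain ⟨x, hx⟩ := hfix M hM
    refine ⟨x, trivial, ?_⟩
    erw [@TopologicalSpace.nhds_generateFrom]
    refine le_iInf fun s => le_iInf fun hs => ?_
    obtain ⟨hxs, g, hg, rfl⟩ := hs
    rw [Filter.le_principal_iff]
    by_contra hns
    have hcompl : {y : X | g y ≠ 0}ᶜ ∈ F := Ultrafilter.compl_mem_iff_notMem.2 hns
    have hZg : {y : X | g y = 0} ∈ F := by
      have : {y : X | g y ≠ 0}ᶜ = {y : X | g y = 0} := by ext y; simp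
      rwa [this] at hcompl
    have hgI : (⟨g, hg⟩ : ↥(baireOne X)) ∈ I := hZg
    have hgM : (⟨g, hg⟩ : ↥(baireOne X)) ∈ M := hIM hgI
    have : x ∈ {y : X | ((⟨g, hg⟩ : ↥(baireOne X)) : X → ℝ) y = 0} := by
      have := Set.mem_iInter₂.1 hx (⟨g, hg⟩ : ↥(baireOne X)) hgM
      exact this
    exact hxs this
end

section
/- Let (X, τ) be a compact Hausdorff space and let σ be the topology on X having {Z(f) : f ∈ B_1(X, τ)} as a base for its closed sets. If σ is strictly finer than τ, then B_1(X, τ) contains at least one free maximal ideal. -/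
open Filter Topology

lemma continuous_mem_baireOne {X : Type*} [TopologicalSpace X] (f : C(X, ℝ)) :
    (f : X → ℝ) ∈ baireOne X :=
  ⟨fun _ => f, fun _ => tendsto_const_nhds⟩

/-- Evaluation at a point as a ring hom on `baireOne X`. -/
def bEval {X : Type*} [TopologicalSpace X] (x : X) : ↥(baireOne X) →+* ℝ :=
  (Pi.evalRingHom (fun _ => ℝ) x).comp (baireOne X).subtype

@[simp] lemma bEval_apply {X : Type*} [TopologicalSpace X] (x : X) (f : ↥(baireOne X)) :
    bEval x f = (f : X → ℝ) x := rfl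

/-- If every maximal ideal is fixed, then any family of Baire one functions whose
zero sets have the finite intersection property has a common zero. -/
lemma fip_common_zero {X : Type*} [TopologicalSpace X]
    (Hfix : ∀ M : Ideal ↥(baireOne X), M.IsMaximal →
      (⋂ f ∈ (M : Set ↥(baireOne X)), {x : X | (f : X → ℝ) x = 0}).Nonempty)
    (S : Set ↥(baireOne X))
    (hS : ∀ F : Finset ↥(baireOne X), ↑F ⊆ S → ∃ x : X, ∀ f ∈ F, (f : X → ℝ) x = 0) :
    ∃ x : X, ∀ f ∈ S, (f : X → ℝ) x = 0 := by
  have hproper : Ideal.span S ≠ ⊤ := by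
    intro htop
    have h1 : (1 : ↥(baireOne X)) ∈ Ideal.span S := htop ▸ Submodule.mem_top
    rw [Ideal.span, Submodule.mem_span_set] at h1
    obtain ⟨c, hsupp, hsum⟩ := h1
    obtain ⟨x, hx⟩ := hS c.support hsupp
    have := congrArg (bEval x) hsum
    rw [map_finsuppSum] at this
    simp only [map_one] at this
    rw [Finsupp.sum] at this
    have hz : ∀ a ∈ c.support, bEval x (c a • a) = 0 := by
      intro a ha
      simp [smul_eq_mul, hx a ha]
    rw [Finset.sum_eq_zero hz] at this
    exact one_ne_zero this.symm
  obtain ⟨M, hM, hle⟩ := Ideal.exists_le_maximal _ hproper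
  obtain ⟨x, hx⟩ := Hfix M hM
  refine ⟨x, fun f hf => ?_⟩
  have : f ∈ M := hle (Ideal.subset_span hf)
  simpa using Set.mem_iInter₂.mp hx f this

/-- In a compact Hausdorff space, every closed set is an intersection of zero sets of
Baire one functions. -/
lemma closed_eq_iInter_zero {X : Type*} [TopologicalSpace X] [CompactSpace X] [T2Space X]
    {C : Set X} (hC : IsClosed C) :
    ∃ S : Set ↥(baireOne X), C = ⋂ g ∈ S, {x : X | (g : X → ℝ) x = 0} := by
  have key : ∀ y : ↥(Cᶜ), ∃ g : ↥(baireOne X),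
      (∀ z ∈ C, (g : X → ℝ) z = 0) ∧ (g : X → ℝ) y = 1 := by
    rintro ⟨y, hy⟩
    have hyc : IsClosed ({y} : Set X) := isClosed_singleton
    have hd : Disjoint C ({y} : Set X) := by
      rw [Set.disjoint_singleton_right]
      exact hy
    obtain ⟨f, hf0, hf1, -⟩ := exists_continuous_zero_one_of_isClosed hC hyc hd
    exact ⟨⟨f, continuous_mem_baireOne f⟩, fun z hz => hf0 hz, hf1 rfl⟩
  choose φ hφ0 hφ1 using key
  refine ⟨Set.range φ, ?_⟩
  apply Set.Subset.antisymm
  · intro z hz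
    simp only [Set.mem_iInter]
    rintro g ⟨y, rfl⟩
    exact hφ0 y z hz
  · intro z hz
    by_contra hzc
    have := Set.mem_iInter₂.mp hz (φ ⟨z, hzc⟩) ⟨⟨z, hzc⟩, rfl⟩
    rw [Set.mem_setOf_eq, hφ1 ⟨z, hzc⟩] at this
    exact one_ne_zero this


/-- If `(X, τ)` is compact Hausdorff and the topology `σ` is strictly finer than `τ`,
then `B₁(X, τ)` has a free maximal ideal. -/
theorem exists_free_maximal_of_sigma_strictly_finer
    (X : Type*) [tau : TopologicalSpace X] [CompactSpace X] [T2Space X]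
    (h : sigmaTop X < tau) :
    ∃ M : Ideal ↥(baireOne X), M.IsMaximal ∧
      (⋂ f ∈ (M : Set ↥(baireOne X)), {x : X | (f : X → ℝ) x = 0}) = ∅ := by
  by_contra hcon
  push_neg at hcon
  have Hfix : ∀ M : Ideal ↥(baireOne X), M.IsMaximal →
      (⋂ f ∈ (M : Set ↥(baireOne X)), {x : X | (f : X → ℝ) x = 0}).Nonempty := hcon
  -- every zero set of a Baire one function is closed
  have hzc : ∀ f : ↥(baireOne X), IsClosed {x : X | (f : X → ℝ) x = 0} := by
    intro f
    apply IsCompact.isClosed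
    apply isCompact_of_finite_subfamily_closed
    intro ι t htcl hempty
    by_contra hne
    push_neg at hne
    have hne' : ∀ u : Finset ι, ({x : X | (f : X → ℝ) x = 0} ∩ ⋂ i ∈ u, t i).Nonempty := hne
    -- represent each t i as an intersection of zero sets
    have hrep : ∀ i : ι, ∃ S : Set ↥(baireOne X),
        t i = ⋂ g ∈ S, {x : X | (g : X → ℝ) x = 0} := fun i => closed_eq_iInter_zero (htcl i)
    choose S hSrep using hrep
    classical
    set T : Set ↥(baireOne X) := insert f (⋃ i, S i) with hT
    -- a tagging function
    have htag : ∀ g ∈ T, g = f ∨ ∃ i, g ∈ S i := by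
      intro g hg
      rcases hg with hg | hg
      · exact Or.inl hg
      · exact Or.inr (Set.mem_iUnion.mp hg)
    have hfip : ∀ F : Finset ↥(baireOne X), ↑F ⊆ T →
        ∃ x : X, ∀ g ∈ F, (g : X → ℝ) x = 0 := by
      intro F hF
      set u : Finset ι :=
        F.biUnion (fun g => if hg : ∃ i, g ∈ S i then {hg.choose} else ∅) with hu
      obtain ⟨x, hxf, hxt⟩ := hne' u
      refine ⟨x, fun g hg => ?_⟩
      by_cases hgi : ∃ i, g ∈ S i
      · have hiu : hgi.choose ∈ u := by
          rw [hu, Finset.mem_biUnion]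
          exact ⟨g, hg, by simp [hgi]⟩
        have hxti : x ∈ t hgi.choose := by
          have := Set.mem_iInter₂.mp hxt
          exact this hgi.choose hiu
        rw [hSrep hgi.choose] at hxti
        exact Set.mem_iInter₂.mp hxti g hgi.choose_spec
      · rcases htag g (hF hg) with rfl | hgi'
        · exact hxf
        · exact absurd hgi' hgi
    obtain ⟨x₀, hx₀⟩ := fip_common_zero Hfix T hfip
    have hxf0 : x₀ ∈ {x : X | (f : X → ℝ) x = 0} := hx₀ f (Set.mem_insert _ _)
    have hxti : ∀ i, x₀ ∈ t i := by
      intro i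
      rw [hSrep i]
      refine Set.mem_iInter₂.mpr fun g hg => ?_
      exact hx₀ g (Set.mem_insert_of_mem _ (Set.mem_iUnion.mpr ⟨i, hg⟩))
    have : x₀ ∈ ({x : X | (f : X → ℝ) x = 0} ∩ ⋂ i, t i) :=
      ⟨hxf0, Set.mem_iInter.mpr hxti⟩
    rw [hempty] at this
    exact this
  -- conclude tau ≤ sigmaTop X
  have hle : tau ≤ sigmaTop X := by
    apply le_generateFrom
    rintro U ⟨g, hg, rfl⟩
    exact (hzc ⟨g, hg⟩).isOpen_compl
  exact h.not_ge hle
end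

section
/- Let (X, τ) be a T_4 space (normal and Hausdorff) and let σ be the topology on X having {Z(f) : f ∈ B_1(X, τ)} as a base for its closed sets. Then σ = τ if and only if B_1(X, τ) = C(X, τ), i.e., if and only if every Baire one function on (X, τ) is continuous. -/
open Filter Topology

open TopologicalSpace

section Aux

variable {X : Type*} [tau : TopologicalSpace X]

lemma continuous_mem_baireOne_s16 {f : X → ℝ} (hf : Continuous f) : f ∈ baireOne X :=
  ⟨fun _ => ⟨f, hf⟩, fun _ => tendsto_const_nhds⟩

lemma max_sub_mem_baireOne {f : X → ℝ} (hf : f ∈ baireOne X) (a : ℝ) :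
    (fun x => max (f x - a) 0) ∈ baireOne X := by
  obtain ⟨F, hF⟩ := hf
  exact ⟨fun n => ⟨fun x => max (F n x - a) 0, by fun_prop⟩,
    fun x => ((hF x).sub tendsto_const_nhds).max tendsto_const_nhds⟩

lemma sub_max_mem_baireOne {f : X → ℝ} (hf : f ∈ baireOne X) (a : ℝ) :
    (fun x => max (a - f x) 0) ∈ baireOne X := by
  obtain ⟨F, hF⟩ := hf
  exact ⟨fun n => ⟨fun x => max (a - F n x) 0, by fun_prop⟩,
    fun x => (tendsto_const_nhds.sub (hF x)).max tendsto_const_nhds⟩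

lemma max_ne_zero_iff {b : ℝ} : max b 0 ≠ 0 ↔ 0 < b := by
  constructor
  · intro h
    by_contra h'
    exact h (max_eq_right (by linarith))
  · intro h
    exact (lt_max_iff.2 (Or.inl h)).ne'

lemma baireOne_sigma_continuous {f : X → ℝ} (hf : f ∈ baireOne X) :
    Continuous[sigmaTop X, inferInstance] f := by
  rw [show (inferInstance : TopologicalSpace ℝ) =
      .generateFrom {s | ∃ a, s = Set.Ioi a ∨ s = Set.Iio a} from
      OrderTopology.topology_eq_generate_intervals, continuous_generateFrom_iff]
  rintro s ⟨a, rfl | rfl⟩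
  · have h : f ⁻¹' Set.Ioi a = {x | (fun x => max (f x - a) 0) x ≠ 0} := by
      ext x
      simp [max_ne_zero_iff, sub_pos]
    rw [h]
    exact GenerateOpen.basic _ ⟨_, max_sub_mem_baireOne hf a, rfl⟩
  · have h : f ⁻¹' Set.Iio a = {x | (fun x => max (a - f x) 0) x ≠ 0} := by
      ext x
      simp [max_ne_zero_iff, sub_pos]
    rw [h]
    exact GenerateOpen.basic _ ⟨_, sub_max_mem_baireOne hf a, rfl⟩

end Aux

/-- For a `T₄` space `(X, τ)`: `σ = τ` iff every Baire one function on `(X, τ)` is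
continuous, i.e. `B₁(X, τ) = C(X, τ)`. -/
theorem sigma_eq_tau_iff_baireOne_eq_continuous
    (X : Type*) [tau : TopologicalSpace X] [T4Space X] :
    sigmaTop X = tau ↔ (baireOne X : Set (X → ℝ)) = {f : X → ℝ | Continuous f} := by
  constructor
  · intro h
    ext f
    simp only [Set.mem_setOf_eq, SetLike.mem_coe]
    refine ⟨fun hf => ?_, continuous_mem_baireOne_s16⟩
    have := baireOne_sigma_continuous hf
    rwa [h] at this
  · intro h
    refine le_antisymm ?_ (le_generateFrom ?_)
    · rw [TopologicalSpace.le_def]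
      intro U hU
      have key : ∀ x ∈ U, ∃ V : Set X,
          GenerateOpen {W : Set X | ∃ f ∈ baireOne X, W = {x | f x ≠ 0}} V ∧ x ∈ V ∧ V ⊆ U := by
        intro x hx
        obtain ⟨g, hg0, hg1, -⟩ := exists_continuous_zero_one_of_isClosed
          (isClosed_compl_iff.2 hU) isClosed_singleton
          (Set.disjoint_singleton_right.2 (by simpa using hx))
        refine ⟨{y | g y ≠ 0}, GenerateOpen.basic _
          ⟨g, continuous_mem_baireOne_s16 g.continuous, rfl⟩, by simp [hg1 rfl], ?_⟩
        intro y hy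
        by_contra hyU
        exact hy (by simpa using hg0 hyU)
      have hUeq : U = ⋃₀ {W | GenerateOpen
          {W : Set X | ∃ f ∈ baireOne X, W = {x | f x ≠ 0}} W ∧ W ⊆ U} := by
        ext y
        constructor
        · intro hy
          obtain ⟨V, h1, h2, h3⟩ := key y hy
          exact ⟨V, ⟨h1, h3⟩, h2⟩
        · rintro ⟨V, ⟨-, hVU⟩, hyV⟩
          exact hVU hyV
      show (sigmaTop X).IsOpen U
      rw [hUeq]
      exact GenerateOpen.sUnion _ fun W hW => hW.1
    · rintro U ⟨f, hfB, rfl⟩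
      have hc : Continuous f := by
        have : f ∈ ({g : X → ℝ | Continuous g} : Set (X → ℝ)) := h ▸ hfB
        exact this
      have hcompl : {x | f x ≠ 0} = {x | f x = 0}ᶜ := rfl
      rw [hcompl]
      exact (isClosed_eq hc continuous_const).isOpen_compl
end

section
/- Let (X, τ) be a perfectly normal T_1 space and let σ be the topology on X having {Z(f) : f ∈ B_1(X, τ)} as a base for its closed sets. Then σ is the discrete topology on X. -/
open Filter Topology

/-- For a perfectly normal `T₁` space `(X, τ)`, the topology `σ` generated by the zero
sets of Baire one functions as a base for closed sets is the discrete topology. -/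
theorem sigmaTop_discrete_of_perfectlyNormal
    (X : Type*) [TopologicalSpace X] [T1Space X] [PerfectlyNormalSpace X] :
    sigmaTop X = ⊥ := by
  classical
  apply eq_bot_of_singletons_open
  intro x
  -- `{x}` is a closed Gδ set
  obtain ⟨U, U_open, hU⟩ :=
    (PerfectlyNormalSpace.closed_gdelta (isClosed_singleton (x := x))).eq_iInter_nat
  -- make the family decreasing
  set V : ℕ → Set X := fun n => ⋂ k ≤ n, U k with hV
  have V_open : ∀ n, IsOpen (V n) := fun n =>
    (Set.finite_Iic n).isOpen_biInter (fun k _ => U_open k)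
  have xV : ∀ n, x ∈ V n := by
    intro n
    simp only [hV, Set.mem_iInter]
    intro k _
    have : x ∈ ⋂ n, U n := by rw [← hU]; exact Set.mem_singleton x
    exact Set.mem_iInter.1 this k
  have V_anti : ∀ m n, m ≤ n → V n ⊆ V m := by
    intro m n hmn
    simp only [hV]
    intro y hy
    simp only [Set.mem_iInter] at hy ⊢
    exact fun k hk => hy k (hk.trans hmn)
  -- for each n, a Urysohn function: 0 on (V n)ᶜ, 1 at x
  have A : ∀ n, ∃ f : C(X, ℝ), Set.EqOn f 0 (V n)ᶜ ∧ Set.EqOn f 1 {x} ∧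
      ∀ y, f y ∈ Set.Icc (0 : ℝ) 1 := by
    intro n
    apply exists_continuous_zero_one_of_isClosed (V_open n).isClosed_compl
      isClosed_singleton
    rw [Set.disjoint_compl_left_iff_subset]
    exact Set.singleton_subset_iff.2 (xV n)
  choose F hF0 hF1 _hFr using A
  -- the indicator function of {x}
  set f : X → ℝ := fun y => if y = x then 1 else 0 with hf
  have hfmem : f ∈ baireOne X := by
    refine ⟨F, fun y => ?_⟩
    rcases eq_or_ne y x with rfl | hyx
    · have : ∀ n, F n y = 1 := fun n => hF1 n rfl
      simp only [this, hf, if_pos rfl]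
      exact tendsto_const_nhds
    · have hy : y ∉ ({x} : Set X) := hyx
      have : y ∉ ⋂ n, U n := by rw [← hU]; exact hy
      obtain ⟨N, hN⟩ : ∃ N, y ∉ U N := by
        simpa [Set.mem_iInter] using this
      have hev : ∀ n ≥ N, F n y = 0 := by
        intro n hn
        apply hF0 n
        intro hyV
        apply hN
        have : y ∈ V N := V_anti N n hn hyV
        simp only [hV, Set.mem_iInter] at this
        exact this N le_rfl
      have : f y = 0 := by simp [hf, hyx]
      rw [this]
      apply Tendsto.congr' _ tendsto_const_nhds
      filter_upwards [eventually_ge_atTop N] with n hn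
      exact (hev n hn).symm
  have hset : ({x} : Set X) = {y | f y ≠ 0} := by
    ext y
    rcases eq_or_ne y x with rfl | hyx
    · simp [hf]
    · simp [hf, hyx]
  rw [hset]
  exact TopologicalSpace.GenerateOpen.basic _ ⟨f, hfmem, rfl⟩
end

section
/- Let (X, τ) be a perfectly normal T_1 space. Then the following are equivalent: (1) τ is the discrete topology; (2) B_1(X, τ) = C(X, τ), i.e., every Baire one function on X is continuous; (3) B_1*(X, τ) = C*(X, τ), i.e., every bounded Baire one function on X is continuous. In particular, every non-discrete perfectly normal T_1 space admits a Baire one function that is not continuous. -/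
open Filter Topology

/-- In a perfectly normal space, the indicator of a closed set is a bounded Baire one
function. -/
lemma indicator_mem_baireOneStar {X : Type*} [TopologicalSpace X] [PerfectlyNormalSpace X]
    {C : Set X} (hC : IsClosed C) :
    (C.indicator (fun _ => (1 : ℝ))) ∈ baireOneStar X := by
  obtain ⟨U, hUopen, hCU⟩ := (PerfectlyNormalSpace.closed_gdelta hC).eq_iInter_nat
  set V : ℕ → Set X := fun n => ⋂ i ∈ Finset.range (n + 1), U i with hV
  have hVopen : ∀ n, IsOpen (V n) := fun n =>
    isOpen_biInter_finset fun i _ => hUopen i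
  have hCV : ∀ n, C ⊆ V n := fun n => by
    rw [hCU]
    exact fun x hx => Set.mem_iInter₂.2 fun i _ => Set.mem_iInter.1 hx i
  have hdisj : ∀ n, Disjoint ((V n)ᶜ) C := fun n =>
    Set.disjoint_left.2 fun x hx hxC => hx (hCV n hxC)
  choose F h0 h1 hmem using fun n =>
    exists_continuous_zero_one_of_isClosed (isClosed_compl_iff.2 (hVopen n)) hC (hdisj n)
  refine ⟨⟨F, fun x => ?_⟩, 1, fun x => ?_⟩
  · by_cases hx : x ∈ C
    · have : ∀ n, F n x = 1 := fun n => h1 n hx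
      simp only [this, Set.indicator_of_mem hx]
      exact tendsto_const_nhds
    · rw [Set.indicator_of_notMem hx]
      have : ∃ n, x ∉ U n := by
        by_contra h
        push_neg at h
        exact hx (hCU ▸ Set.mem_iInter.2 h)
      obtain ⟨n, hn⟩ := this
      have hev : ∀ m, n ≤ m → F m x = 0 := by
        intro m hm
        apply h0 m
        intro hxV
        exact hn (Set.mem_iInter₂.1 hxV n (Finset.mem_range.2 (Nat.lt_succ_of_le hm)))
      refine tendsto_atTop_of_eventually_const (i₀ := n) hev
  · by_cases hx : x ∈ C <;> simp [hx]

/-- For a perfectly normal `T₁` space `X`, the following are equivalent: `X` is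
discrete; every Baire one function on `X` is continuous (`B₁(X) = C(X)`); every bounded
Baire one function on `X` is continuous (`B₁*(X) = C*(X)`). In particular a non-discrete
perfectly normal `T₁` space admits a non-continuous Baire one function. -/
theorem discrete_iff_baireOne_eq_continuous
    (X : Type*) [TopologicalSpace X] [T1Space X] [PerfectlyNormalSpace X] :
    (DiscreteTopology X ↔ ∀ f ∈ baireOne X, Continuous f) ∧
    (DiscreteTopology X ↔ ∀ f ∈ baireOneStar X, Continuous f) := by
  have key : (∀ f ∈ baireOneStar X, Continuous f) → DiscreteTopology X := by
    intro h
    rw [discreteTopology_iff_isOpen_singleton]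
    intro x
    have hcont : Continuous (({x} : Set X).indicator (fun _ => (1 : ℝ))) :=
      h _ (indicator_mem_baireOneStar (isClosed_singleton))
    have : ({x} : Set X) =
        (({x} : Set X).indicator (fun _ => (1 : ℝ))) ⁻¹' (Set.Ioi (1 / 2 : ℝ)) := by
      ext y
      by_cases hy : y ∈ ({x} : Set X) <;> simp [hy] <;> norm_num
    rw [this]
    exact isOpen_Ioi.preimage hcont
  have star_sub : ∀ f ∈ baireOneStar X, f ∈ baireOne X := fun f hf => hf.1
  constructor
  · constructor
    · intro hd f _
      exact continuous_of_discreteTopology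
    · intro h
      exact key fun f hf => h f (star_sub f hf)
  · constructor
    · intro hd f _
      exact continuous_of_discreteTopology
    · exact key
end
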